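/- (Loehr–Warrington ctot formula) Let D be a Young diagram fitting below the diagonal of R_{P,Q} (P = Kp, Q = Kq, p,q coprime positive, K positive). Then ctot_{q/p}(D) := |{c \in D : p·l(c) = q·(a(c)+1)}| + |{c \in D : p·(l(c)+1) = q·a(c)}| = \sum_{v} |W_{in}(v)|·|N_{in}(v)| - K + |N_{in}(0)|, where the sum is over integer labels v of boundary-path vertices, W_{in}(v) is the set of westward boundary edges whose endpoint has label v, and N_{in}(v) the set of northward boundary edges whose endpoint has label v. -/

import Mathlib

/-- A Young diagram: a finite down-closed subset of ℕ². -/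
def IsYoung (D : Finset (ℕ × ℕ)) : Prop :=
  ∀ x y x' y', (x, y) ∈ D → x' ≤ x → y' ≤ y → (x', y') ∈ D

/-- Arm length of a box inside the diagram. -/
def arm (D : Finset (ℕ × ℕ)) (c : ℕ × ℕ) : ℕ :=
  (D.filter fun d => d.2 = c.2 ∧ c.1 < d.1).card

/-- Leg length of a box inside the diagram. -/
def leg (D : Finset (ℕ × ℕ)) (c : ℕ × ℕ) : ℕ :=
  (D.filter fun d => d.1 = c.1 ∧ c.2 < d.2).card

/-- Arm length of a box in the complement of the diagram. -/
def coArm (D : Finset (ℕ × ℕ)) (c : ℕ × ℕ) : ℕ :=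
  ((Finset.range c.1).filter fun x' => (x', c.2) ∉ D).card

/-- Leg length of a box in the complement of the diagram. -/
def coLeg (D : Finset (ℕ × ℕ)) (c : ℕ × ℕ) : ℕ :=
  ((Finset.range c.2).filter fun y' => (c.1, y') ∉ D).card

/-- Length of column x of the diagram. -/
def colLen (D : Finset (ℕ × ℕ)) (x : ℕ) : ℕ := (D.filter fun c => c.1 = x).card

/-- Length of row y of the diagram. -/
def rowLen (D : Finset (ℕ × ℕ)) (y : ℕ) : ℕ := (D.filter fun c => c.2 = y).card

/-- Label of the endpoint of the westward boundary edge in column x.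
The boundary path starts at the southeast corner (P,0) with label 0, each
westward step adds q and each northward step subtracts p; the westward edge in
column x ends at the point (x, colLen D x). -/
def wlabel (D : Finset (ℕ × ℕ)) (p q P : ℕ) (x : ℕ) : ℤ :=
  ((P : ℤ) - x) * q - (colLen D x : ℤ) * p

/-- Label of the endpoint of the northward boundary edge in row y: it ends at
the point (rowLen D y, y+1). -/
def nlabel (D : Finset (ℕ × ℕ)) (p q P : ℕ) (y : ℕ) : ℤ :=
  ((P : ℤ) - rowLen D y) * q - ((y : ℤ) + 1) * p

/-- Number of westward boundary edges entering a vertex labeled v. -/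
def Win (D : Finset (ℕ × ℕ)) (p q P : ℕ) (v : ℤ) : ℕ :=
  ((Finset.range P).filter fun x => wlabel D p q P x = v).card

/-- Number of northward boundary edges entering a vertex labeled v. -/
def Nin (D : Finset (ℕ × ℕ)) (p q P Q : ℕ) (v : ℤ) : ℕ :=
  ((Finset.range Q).filter fun y => nlabel D p q P y = v).card

/-- The set of labels of vertices of the boundary graph M(D). -/
def labels (D : Finset (ℕ × ℕ)) (p q P Q : ℕ) : Finset ℤ :=
  ((Finset.range P).image (wlabel D p q P)) ∪ ((Finset.range Q).image (nlabel D p q P))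

lemma downset_mem_iff (S : Finset ℕ) (hS : ∀ a ∈ S, ∀ b, b ≤ a → b ∈ S) (y : ℕ) :
    y ∈ S ↔ y < S.card := by
  constructor
  · intro hy
    have h : Finset.range (y+1) ⊆ S := by
      intro b hb
      exact hS y hy b (by simpa [Nat.lt_succ_iff] using Finset.mem_range.1 hb)
    have := Finset.card_le_card h
    simpa using this
  · intro hy
    by_contra hy'
    have h : S ⊆ Finset.range y := by
      intro a ha
      refine Finset.mem_range.2 ?_
      by_contra h
      push_neg at h
      exact hy' (hS a ha y h)
    have := Finset.card_le_card h
    simp at this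
    omega

lemma mem_iff_lt_colLen (D : Finset (ℕ × ℕ)) (hD : IsYoung D) (x y : ℕ) :
    (x, y) ∈ D ↔ y < colLen D x := by
  have hinj : Set.InjOn Prod.snd ((D.filter fun c => c.1 = x : Finset (ℕ×ℕ)) : Set (ℕ×ℕ)) := by
    intro a ha b hb hab
    simp only [Finset.coe_filter, Set.mem_setOf_eq] at ha hb
    exact Prod.ext (ha.2.trans hb.2.symm) hab
  have hcard : colLen D x = ((D.filter fun c => c.1 = x).image Prod.snd).card := by
    rw [Finset.card_image_of_injOn hinj]; rfl
  have hmem : ∀ z, z ∈ (D.filter fun c => c.1 = x).image Prod.snd ↔ (x, z) ∈ D := by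
    intro z
    simp only [Finset.mem_image, Finset.mem_filter]
    constructor
    · rintro ⟨c, ⟨hc, hc1⟩, hc2⟩
      have : c = (x, z) := Prod.ext hc1 hc2
      rwa [this] at hc
    · intro h; exact ⟨(x,z), ⟨h, rfl⟩, rfl⟩
  rw [hcard, ← hmem y]
  exact (downset_mem_iff _ (by
    intro a ha b hb
    rw [hmem] at ha ⊢
    exact hD x a x b ha le_rfl hb) y)

lemma mem_iff_lt_rowLen (D : Finset (ℕ × ℕ)) (hD : IsYoung D) (x y : ℕ) :
    (x, y) ∈ D ↔ x < rowLen D y := by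
  have hinj : Set.InjOn Prod.fst ((D.filter fun c => c.2 = y : Finset (ℕ×ℕ)) : Set (ℕ×ℕ)) := by
    intro a ha b hb hab
    simp only [Finset.coe_filter, Set.mem_setOf_eq] at ha hb
    exact Prod.ext hab (ha.2.trans hb.2.symm)
  have hcard : rowLen D y = ((D.filter fun c => c.2 = y).image Prod.fst).card := by
    rw [Finset.card_image_of_injOn hinj]; rfl
  have hmem : ∀ z, z ∈ (D.filter fun c => c.2 = y).image Prod.fst ↔ (z, y) ∈ D := by
    intro z
    simp only [Finset.mem_image, Finset.mem_filter]
    constructor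
    · rintro ⟨c, ⟨hc, hc1⟩, hc2⟩
      have : c = (z, y) := Prod.ext hc2 hc1
      rwa [this] at hc
    · intro h; exact ⟨(z,y), ⟨h, rfl⟩, rfl⟩
  rw [hcard, ← hmem x]
  exact (downset_mem_iff _ (by
    intro a ha b hb
    rw [hmem] at ha ⊢
    exact hD a y b y ha hb le_rfl) x)

lemma rowLen_anti (D : Finset (ℕ × ℕ)) (hD : IsYoung D) {y y' : ℕ} (h : y ≤ y') :
    rowLen D y' ≤ rowLen D y := by
  by_contra hc
  push_neg at hc
  have h1 : (rowLen D y, y') ∈ D := (mem_iff_lt_rowLen D hD _ _).2 hc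
  have h2 : (rowLen D y, y) ∈ D := hD _ _ _ _ h1 le_rfl h
  have := (mem_iff_lt_rowLen D hD _ _).1 h2
  omega

lemma arm_eq (D : Finset (ℕ × ℕ)) (hD : IsYoung D) {x y : ℕ} (h : (x, y) ∈ D) :
    arm D (x, y) + (x + 1) = rowLen D y := by
  have hset : (D.filter fun d => d.2 = (x,y).2 ∧ (x,y).1 < d.1)
      = (Finset.Ico (x+1) (rowLen D y)).image (fun a => (a, y)) := by
    ext ⟨a, b⟩
    simp only [Finset.mem_filter, Finset.mem_image, Finset.mem_Ico]
    constructor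
    · rintro ⟨hab, hb, ha⟩
      subst hb
      exact ⟨a, ⟨ha, (mem_iff_lt_rowLen D hD _ _).1 hab⟩, rfl⟩
    · rintro ⟨a', ⟨ha1, ha2⟩, heq⟩
      simp only [Prod.mk.injEq] at heq
      obtain ⟨rfl, rfl⟩ := heq
      exact ⟨(mem_iff_lt_rowLen D hD _ _).2 ha2, rfl, ha1⟩
  have hx : x < rowLen D y := (mem_iff_lt_rowLen D hD _ _).1 h
  have hcard : arm D (x, y) = (Finset.Ico (x+1) (rowLen D y)).card := by
    rw [arm, hset, Finset.card_image_of_injective _ (fun a b hab => by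
      simpa using (Prod.mk.injEq ..).mp hab |>.1)]
  rw [hcard, Nat.card_Ico]
  omega

lemma leg_eq (D : Finset (ℕ × ℕ)) (hD : IsYoung D) {x y : ℕ} (h : (x, y) ∈ D) :
    leg D (x, y) + (y + 1) = colLen D x := by
  have hset : (D.filter fun d => d.1 = (x,y).1 ∧ (x,y).2 < d.2)
      = (Finset.Ico (y+1) (colLen D x)).image (fun b => (x, b)) := by
    ext ⟨a, b⟩
    simp only [Finset.mem_filter, Finset.mem_image, Finset.mem_Ico]
    constructor
    · rintro ⟨hab, ha, hb⟩
      subst ha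
      exact ⟨b, ⟨hb, (mem_iff_lt_colLen D hD _ _).1 hab⟩, rfl⟩
    · rintro ⟨b', ⟨hb1, hb2⟩, heq⟩
      simp only [Prod.mk.injEq] at heq
      obtain ⟨rfl, rfl⟩ := heq
      exact ⟨(mem_iff_lt_colLen D hD _ _).2 hb2, rfl, hb1⟩
  have hy : y < colLen D x := (mem_iff_lt_colLen D hD _ _).1 h
  have hcard : leg D (x, y) = (Finset.Ico (y+1) (colLen D x)).card := by
    rw [leg, hset, Finset.card_image_of_injective _ (fun a b hab => by
      simpa using (Prod.mk.injEq ..).mp hab |>.2)]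
  rw [hcard, Nat.card_Ico]
  omega

open Finset in
lemma sum_WinNin (D : Finset (ℕ × ℕ)) (p q P Q : ℕ) :
    ∑ v ∈ labels D p q P Q, (Win D p q P v) * (Nin D p q P Q v)
      = (((Finset.range P) ×ˢ (Finset.range Q)).filter
          (fun c => wlabel D p q P c.1 = nlabel D p q P c.2)).card := by
  classical
  have hset : (((Finset.range P) ×ˢ (Finset.range Q)).filter
          (fun c => wlabel D p q P c.1 = nlabel D p q P c.2))
      = (labels D p q P Q).biUnion (fun v =>
          ((Finset.range P).filter (fun x => wlabel D p q P x = v)) ×ˢ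
          ((Finset.range Q).filter (fun y => nlabel D p q P y = v))) := by
    ext ⟨x, y⟩
    simp only [mem_filter, mem_product, mem_biUnion, mem_range, labels, mem_union, mem_image]
    constructor
    · rintro ⟨⟨hx, hy⟩, heq⟩
      exact ⟨wlabel D p q P x, Or.inl ⟨x, hx, rfl⟩, ⟨hx, rfl⟩, hy, heq.symm⟩
    · rintro ⟨v, _, ⟨hx, hvx⟩, hy, hvy⟩
      exact ⟨⟨hx, hy⟩, by rw [hvx, hvy]⟩
  rw [hset, card_biUnion]
  · refine Finset.sum_congr rfl fun v _ => ?_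
    rw [card_product, Win, Nin]
  · intro v _ w _ hvw
    simp only [Finset.disjoint_left, mem_product, mem_filter]
    rintro ⟨x, y⟩ ⟨⟨_, h1⟩, _⟩ ⟨⟨_, h2⟩, _⟩
    exact hvw (h1 ▸ h2 ▸ rfl)

section Main
variable (D : Finset (ℕ × ℕ)) (hD : IsYoung D) (p q K : ℕ)
  (hp : 0 < p) (hq : 0 < q) (hK : 0 < K) (hpq : Nat.Coprime p q)
  (hdiag : ∀ c ∈ D, q * c.1 + p * c.2 + p + q ≤ K * p * q)

include hdiag hq in
lemma memP : ∀ c ∈ D, c.1 < K * p := by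
  intro c hc
  have h := hdiag c hc
  have h2 : q * c.1 < q * (K * p) := by
    have : q * (K*p) = K*p*q := by ring
    omega
  exact Nat.lt_of_mul_lt_mul_left h2

include hdiag hp in
lemma memQ : ∀ c ∈ D, c.2 < K * q := by
  intro c hc
  have h := hdiag c hc
  have h2 : p * c.2 < p * (K * q) := by
    have : p * (K*q) = K*p*q := by ring
    omega
  exact Nat.lt_of_mul_lt_mul_left h2

include hD hdiag hp in
lemma colLen_le : ∀ x, colLen D x ≤ K * q := by
  intro x
  by_contra h
  push_neg at h
  exact absurd (memQ D p q K hp hdiag _ ((mem_iff_lt_colLen D hD x (K*q)).2 h)) (lt_irrefl _)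

include hD hdiag hq in
lemma rowLen_le : ∀ y, rowLen D y ≤ K * p := by
  intro y
  by_contra h
  push_neg at h
  exact absurd (memP D p q K hq hdiag _ ((mem_iff_lt_rowLen D hD (K*p) y).2 h)) (lt_irrefl _)

include hD hdiag hp hq in
lemma rowLen_jq (j : ℕ) (h1 : 1 ≤ j) (h2 : j ≤ K) : rowLen D (j*q - 1) ≤ (K - j) * p := by
  by_contra h
  push_neg at h
  have hc : ((K-j)*p, j*q - 1) ∈ D := (mem_iff_lt_rowLen D hD _ _).2 h
  have hd := hdiag _ hc
  simp only at hd
  obtain ⟨k, hk⟩ : ∃ k, K = j + k := ⟨K - j, by omega⟩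
  subst hk
  have e0 : 1 ≤ j * q := Nat.one_le_iff_ne_zero.2 (by positivity)
  obtain ⟨m, hm⟩ : ∃ m, j * q = m + 1 := ⟨j*q - 1, by omega⟩
  have e1 : p * (j * q - 1) + p = p * (j * q) := by
    rw [hm]; simp; ring
  have e2 : q * ((j + k - j) * p) = k * (p * q) := by
    have : j + k - j = k := by omega
    rw [this]; ring
  have e3 : p * (j * q) = j * (p * q) := by ring
  have e4 : (j + k) * p * q = j * (p*q) + k * (p*q) := by ring
  have hpq' : 0 < p * q := by positivity
  rw [e2] at hd
  omega

include hD hdiag hp hq in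
lemma rowLen_Kjq (j : ℕ) (h1 : 1 ≤ j) (h2 : j ≤ K) : rowLen D ((K - j)*q) ≤ j * p := by
  by_contra h
  push_neg at h
  have hc : (j*p, (K-j)*q) ∈ D := (mem_iff_lt_rowLen D hD _ _).2 h
  have hd := hdiag _ hc
  simp only at hd
  obtain ⟨k, hk⟩ : ∃ k, K = j + k := ⟨K - j, by omega⟩
  subst hk
  have e1 : q * (j * p) = j * (p * q) := by ring
  have e2 : p * ((j + k - j) * q) = k * (p * q) := by
    have : j + k - j = k := by omega
    rw [this]; ring
  have e3 : (j + k) * p * q = j * (p*q) + k * (p*q) := by ring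
  omega

include hD hdiag hp hq in
lemma rowLen_Kq : rowLen D (K * q) = 0 := by
  by_contra h
  have hc : (0, K*q) ∈ D := (mem_iff_lt_rowLen D hD _ _).2 (by omega)
  have hd := hdiag _ hc
  simp only [Nat.mul_zero] at hd
  have : p * (K * q) = K * p * q := by ring
  omega
end Main

section Main2
variable (D : Finset (ℕ × ℕ)) (hD : IsYoung D) (p q K : ℕ)
  (hp : 0 < p) (hq : 0 < q) (hK : 0 < K) (hpq : Nat.Coprime p q)
  (hdiag : ∀ c ∈ D, q * c.1 + p * c.2 + p + q ≤ K * p * q)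

include hD hp hq hdiag in
lemma label_iff_inD {x y : ℕ} (hxy : (x, y) ∈ D) :
    wlabel D p q (K*p) x = nlabel D p q (K*p) y ↔ p * leg D (x,y) = q * (arm D (x,y) + 1) := by
  have hrow : (rowLen D y : ℤ) = arm D (x,y) + x + 1 := by
    have := arm_eq D hD hxy
    push_cast [← this]
    ring
  have hcol : (colLen D x : ℤ) = leg D (x,y) + y + 1 := by
    have := leg_eq D hD hxy
    push_cast [← this]
    ring
  rw [wlabel, nlabel]
  rw [show (p * leg D (x,y) = q * (arm D (x,y) + 1)) ↔
      ((p : ℤ) * leg D (x,y) = q * (arm D (x,y) + 1)) by exact_mod_cast Iff.rfl]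
  constructor
  · intro h
    linear_combination (-1 : ℤ) * h - (p:ℤ) * hcol + (q:ℤ) * hrow
  · intro h
    linear_combination (-1 : ℤ) * h - (p:ℤ) * hcol + (q:ℤ) * hrow

include hD hp hq hdiag in
lemma step2 :
    (((Finset.range (K*p)) ×ˢ (Finset.range (K*q))).filter
        (fun c => wlabel D p q (K*p) c.1 = nlabel D p q (K*p) c.2)).filter (fun c => c ∈ D)
      = D.filter (fun c => p * leg D c = q * (arm D c + 1)) := by
  ext ⟨x, y⟩
  simp only [Finset.mem_filter, Finset.mem_product, Finset.mem_range]
  constructor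
  · rintro ⟨⟨⟨hx, hy⟩, heq⟩, hmem⟩
    exact ⟨hmem, (label_iff_inD D hD p q K hp hq hdiag hmem).1 heq⟩
  · rintro ⟨hmem, hcond⟩
    exact ⟨⟨⟨memP D p q K hq hdiag _ hmem, memQ D p q K hp hdiag _ hmem⟩,
      (label_iff_inD D hD p q K hp hq hdiag hmem).2 hcond⟩, hmem⟩
end Main2

def Ejset (D : Finset (ℕ × ℕ)) (p q K j : ℕ) : Finset (ℕ × ℕ) :=
  ((Finset.range (K*p)) ×ˢ (Finset.range (K*q))).filter
    (fun c => c.1 = rowLen D c.2 + j*p ∧ c.2 + 1 = colLen D c.1 + j*q)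

def Cjset (D : Finset (ℕ × ℕ)) (p q j : ℕ) : Finset (ℕ × ℕ) :=
  D.filter (fun c => rowLen D c.2 = c.1 + j*p + 1 ∧ colLen D c.1 = c.2 + j*q)

section Main3
variable (D : Finset (ℕ × ℕ)) (hD : IsYoung D) (p q K : ℕ)
  (hp : 0 < p) (hq : 0 < q) (hK : 0 < K) (hpq : Nat.Coprime p q)
  (hdiag : ∀ c ∈ D, q * c.1 + p * c.2 + p + q ≤ K * p * q)

include hD hp hq hpq in
lemma step3 :
    (((Finset.range (K*p)) ×ˢ (Finset.range (K*q))).filter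
        (fun c => wlabel D p q (K*p) c.1 = nlabel D p q (K*p) c.2)).filter (fun c => c ∉ D)
      = (Finset.Icc 1 K).biUnion (fun j => Ejset D p q K j) := by
  ext ⟨x, y⟩
  simp only [Finset.mem_filter, Finset.mem_product, Finset.mem_range, Finset.mem_biUnion,
    Finset.mem_Icc, Ejset]
  constructor
  · rintro ⟨⟨⟨hx, hy⟩, heq⟩, hnmem⟩
    have hR : rowLen D y ≤ x := by
      by_contra h
      push_neg at h
      exact hnmem ((mem_iff_lt_rowLen D hD x y).2 h)
    have hC : colLen D x ≤ y := by
      by_contra h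
      push_neg at h
      exact hnmem ((mem_iff_lt_colLen D hD x y).2 h)
    rw [wlabel, nlabel] at heq
    have hZ : (q:ℤ) * ((x:ℤ) - rowLen D y) = (p:ℤ) * ((y:ℤ) + 1 - colLen D x) := by
      linear_combination (-1 : ℤ) * heq
    have hab : q * (x - rowLen D y) = p * (y + 1 - colLen D x) := by
      have h1 : ((x - rowLen D y : ℕ) : ℤ) = (x:ℤ) - rowLen D y := by
        push_cast [Nat.cast_sub hR]; ring
      have h2 : ((y + 1 - colLen D x : ℕ) : ℤ) = (y:ℤ) + 1 - colLen D x := by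
        push_cast [Nat.cast_sub (by omega : colLen D x ≤ y + 1)]; ring
      exact_mod_cast h1 ▸ h2 ▸ hZ
    set a := x - rowLen D y with ha
    set b := y + 1 - colLen D x with hb
    have hb1 : 1 ≤ b := by omega
    have hqb : q ∣ b := (Nat.Coprime.dvd_of_dvd_mul_left hpq.symm ⟨a, hab.symm⟩)
    obtain ⟨j, hj⟩ := hqb
    have hja : a = j * p := by
      have h3 : q * a = q * (j * p) := by rw [hab, hj]; ring
      exact Nat.eq_of_mul_eq_mul_left hq h3
    have hj1 : 1 ≤ j := by
      rcases Nat.eq_zero_or_pos j with h | h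
      · subst h; simp at hj; omega
      · exact h
    have hjK : j ≤ K := by
      have : j * p < K * p := by omega
      have := Nat.lt_of_mul_lt_mul_right this
      omega
    have e5 : q * j = j * q := Nat.mul_comm q j
    refine ⟨j, ⟨hj1, hjK⟩, ⟨hx, hy⟩, by omega, by omega⟩
  · rintro ⟨j, ⟨hj1, hjK⟩, ⟨hx, hy⟩, h1, h2⟩
    have e5 : q * j = j * q := Nat.mul_comm q j
    have hnmem : (x, y) ∉ D := by
      rw [mem_iff_lt_rowLen D hD]
      omega
    refine ⟨⟨⟨hx, hy⟩, ?_⟩, hnmem⟩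
    rw [wlabel, nlabel]
    have h1' : (x:ℤ) = rowLen D y + j * p := by exact_mod_cast h1
    have h2' : (y:ℤ) + 1 = colLen D x + j * q := by exact_mod_cast h2
    linear_combination (-(q:ℤ)) * h1' + (p:ℤ) * h2'

include hq in
lemma step3disj : ((Finset.Icc 1 K : Finset ℕ) : Set ℕ).PairwiseDisjoint (fun j => Ejset D p q K j) := by
  intro j _ j' _ hjj'
  simp only [Function.onFun, Finset.disjoint_left, Ejset, Finset.mem_filter]
  rintro ⟨x, y⟩ ⟨_, _, h2⟩ ⟨_, _, h2'⟩
  exact hjj' (Nat.eq_of_mul_eq_mul_right hq (by omega))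

include hD hp hq hpq hdiag in
lemma step4 :
    D.filter (fun c => p * (leg D c + 1) = q * arm D c)
      = (Finset.Icc 1 K).biUnion (fun j => Cjset D p q j) := by
  ext ⟨x, y⟩
  simp only [Finset.mem_filter, Finset.mem_biUnion, Finset.mem_Icc, Cjset]
  constructor
  · rintro ⟨hmem, hcond⟩
    have hrow := arm_eq D hD hmem
    have hcol := leg_eq D hD hmem
    have hpA : p ∣ arm D (x, y) :=
      Nat.Coprime.dvd_of_dvd_mul_left hpq ⟨leg D (x,y) + 1, hcond.symm⟩
    obtain ⟨j, hj⟩ := hpA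
    have hjL : leg D (x, y) + 1 = j * q := by
      have h3 : p * (leg D (x,y) + 1) = p * (j * q) := by
        rw [hcond, hj]; ring
      exact Nat.eq_of_mul_eq_mul_left hp h3
    have hj1 : 1 ≤ j := by
      rcases Nat.eq_zero_or_pos j with h | h
      · subst h; simp at hjL
      · exact h
    have e5 : p * j = j * p := Nat.mul_comm p j
    have e6 : q * j = j * q := Nat.mul_comm q j
    have hjK : j ≤ K := by
      have hCle := colLen_le D hD p q K hp hdiag x
      have h4 : j * q ≤ K * q := by omega
      exact Nat.le_of_mul_le_mul_right h4 hq
    exact ⟨j, ⟨hj1, hjK⟩, hmem, by omega, by omega⟩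
  · rintro ⟨j, ⟨hj1, hjK⟩, hmem, h1, h2⟩
    have hrow := arm_eq D hD hmem
    have hcol := leg_eq D hD hmem
    refine ⟨hmem, ?_⟩
    have hA : arm D (x, y) = j * p := by omega
    have hL : leg D (x, y) + 1 = j * q := by omega
    rw [hA, hL]
    ring

include hq in
lemma step4disj : ((Finset.Icc 1 K : Finset ℕ) : Set ℕ).PairwiseDisjoint (fun j => Cjset D p q j) := by
  intro j _ j' _ hjj'
  simp only [Function.onFun, Finset.disjoint_left, Cjset, Finset.mem_filter]
  rintro ⟨x, y⟩ ⟨_, _, h2⟩ ⟨_, _, h2'⟩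
  exact hjj' (Nat.eq_of_mul_eq_mul_right hq (by omega))
end Main3

section Main4
variable (D : Finset (ℕ × ℕ)) (hD : IsYoung D) (p q K : ℕ)
  (hp : 0 < p) (hq : 0 < q) (hK : 0 < K) (hpq : Nat.Coprime p q)
  (hdiag : ∀ c ∈ D, q * c.1 + p * c.2 + p + q ≤ K * p * q)

include hD hp hq hdiag in
lemma stepB (j : ℕ) (hj1 : 1 ≤ j) (hjK : j ≤ K) :
    (Cjset D p q j).card = ((Finset.range (K*q - j*q + 1)).filter
      (fun t => rowLen D (j*q + t) + j*p < rowLen D t ∧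
        rowLen D t ≤ rowLen D (j*q - 1 + t) + j*p)).card := by
  have hjqKq : j * q ≤ K * q := Nat.mul_le_mul_right q hjK
  have hjq1 : 1 ≤ j * q := Nat.one_le_iff_ne_zero.2 (by positivity)
  refine Finset.card_bij' (fun c _ => c.2) (fun t _ => (rowLen D t - j*p - 1, t)) ?_ ?_ ?_ ?_
  · rintro ⟨x, y⟩ hc
    simp only [Cjset, Finset.mem_filter] at hc
    obtain ⟨hmem, hr, hcol⟩ := hc
    have hr' : rowLen D y = x + j*p + 1 := hr
    have hcol' : colLen D x = y + j*q := hcol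
    have hCle := colLen_le D hD p q K hp hdiag x
    have h1 : (x, j*q + y) ∉ D := by
      rw [mem_iff_lt_colLen D hD]
      omega
    rw [mem_iff_lt_rowLen D hD] at h1
    have h2 : (x, j*q - 1 + y) ∈ D := by
      rw [mem_iff_lt_colLen D hD]
      omega
    rw [mem_iff_lt_rowLen D hD] at h2
    simp only [Finset.mem_filter, Finset.mem_range]
    refine ⟨by omega, by omega, by omega⟩
  · intro t ht
    simp only [Finset.mem_filter, Finset.mem_range] at ht
    obtain ⟨htM, hF, hG⟩ := ht
    simp only [Cjset, Finset.mem_filter]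
    have hmem : (rowLen D t - j*p - 1, t) ∈ D := by
      rw [mem_iff_lt_rowLen D hD]
      omega
    have h1 : (rowLen D t - j*p - 1, j*q + t) ∉ D := by
      rw [mem_iff_lt_rowLen D hD]
      omega
    rw [mem_iff_lt_colLen D hD] at h1
    have h2 : (rowLen D t - j*p - 1, j*q - 1 + t) ∈ D := by
      rw [mem_iff_lt_rowLen D hD]
      omega
    rw [mem_iff_lt_colLen D hD] at h2
    exact ⟨hmem, by omega, by omega⟩
  · rintro ⟨x, y⟩ hc
    simp only [Cjset, Finset.mem_filter] at hc
    obtain ⟨hmem, hr, hcol⟩ := hc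
    have hr' : rowLen D y = x + j*p + 1 := hr
    have : rowLen D y - j*p - 1 = x := by omega
    exact Prod.ext this rfl
  · intro t ht
    rfl
end Main4

section Main5
variable (D : Finset (ℕ × ℕ)) (hD : IsYoung D) (p q K : ℕ)
  (hp : 0 < p) (hq : 0 < q) (hK : 0 < K) (hpq : Nat.Coprime p q)
  (hdiag : ∀ c ∈ D, q * c.1 + p * c.2 + p + q ≤ K * p * q)

include hD hp hq hdiag in
lemma stepTel (j : ℕ) (hj1 : 1 ≤ j) (hjK : j ≤ K) :
    ∑ t ∈ Finset.range (K*q - j*q + 1),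
        (if (t = 0 ∨ rowLen D (j*q - 1 + t) + j*p < rowLen D (t-1)) ∧
            rowLen D t ≤ rowLen D (j*q - 1 + t) + j*p then (1:ℤ) else 0)
      = ∑ t ∈ Finset.range (K*q - j*q + 1),
          (if rowLen D (j*q + t) + j*p < rowLen D t ∧
              rowLen D t ≤ rowLen D (j*q - 1 + t) + j*p then (1:ℤ) else 0) + 1 := by
  have hjq1 : 1 ≤ j * q := Nat.one_le_iff_ne_zero.2 (by positivity)
  have hjqKq : j * q ≤ K * q := Nat.mul_le_mul_right q hjK
  set M := K*q - j*q + 1 with hM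
  set H : ℕ → ℤ := fun t => if t = 0 then 1
    else if rowLen D (j*q - 1 + t) + j*p < rowLen D (t-1) then 1 else 0 with hH
  have key : ∀ t, (if (t = 0 ∨ rowLen D (j*q - 1 + t) + j*p < rowLen D (t-1)) ∧
            rowLen D t ≤ rowLen D (j*q - 1 + t) + j*p then (1:ℤ) else 0)
        - (if rowLen D (j*q + t) + j*p < rowLen D t ∧
              rowLen D t ≤ rowLen D (j*q - 1 + t) + j*p then (1:ℤ) else 0)
        = H t - H (t+1) := by
    intro t
    have ha1 : rowLen D t ≤ rowLen D (t-1) := rowLen_anti D hD (Nat.sub_le t 1)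
    have ha2 : rowLen D (j*q + t) ≤ rowLen D (j*q - 1 + t) := rowLen_anti D hD (by omega)
    have e1 : j*q - 1 + (t+1) = j*q + t := by omega
    simp only [hH, e1, Nat.add_sub_cancel]
    split_ifs <;> first | omega | exact (‹False›).elim
  have hsum : ∑ t ∈ Finset.range M,
      ((if (t = 0 ∨ rowLen D (j*q - 1 + t) + j*p < rowLen D (t-1)) ∧
            rowLen D t ≤ rowLen D (j*q - 1 + t) + j*p then (1:ℤ) else 0)
        - (if rowLen D (j*q + t) + j*p < rowLen D t ∧
              rowLen D t ≤ rowLen D (j*q - 1 + t) + j*p then (1:ℤ) else 0)) = H 0 - H M := by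
    rw [Finset.sum_congr rfl (fun t _ => key t)]
    exact Finset.sum_range_sub' H M
  rw [Finset.sum_sub_distrib] at hsum
  have hH0 : H 0 = 1 := by simp [hH]
  have hHM : H M = 0 := by
    have h4 := rowLen_Kjq D hD p q K hp hq hdiag j hj1 hjK
    have h5 := rowLen_Kq D hD p q K hp hq hdiag
    have e4 : (K - j)*q = K*q - j*q := Nat.sub_mul K j q
    rw [e4] at h4
    have e2 : j*q - 1 + M = K*q := by omega
    have e3 : M - 1 = K*q - j*q := by omega
    simp only [hH]
    rw [if_neg (by omega), e2, e3, if_neg (by omega)]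
  omega
end Main5

section Main6
variable (D : Finset (ℕ × ℕ)) (hD : IsYoung D) (p q K : ℕ)
  (hp : 0 < p) (hq : 0 < q) (hK : 0 < K) (hpq : Nat.Coprime p q)
  (hdiag : ∀ c ∈ D, q * c.1 + p * c.2 + p + q ≤ K * p * q)

include hD hp hq hdiag in
lemma stepA (j : ℕ) (hj1 : 1 ≤ j) (hjK : j ≤ K) :
    (Ejset D p q K j).card + (if rowLen D (j*q - 1) = (K - j)*p then 1 else 0)
      = ((Finset.range (K*q - j*q + 1)).filter
          (fun t => (t = 0 ∨ rowLen D (j*q - 1 + t) + j*p < rowLen D (t-1)) ∧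
            rowLen D t ≤ rowLen D (j*q - 1 + t) + j*p)).card := by
  have hjq1 : 1 ≤ j * q := Nat.one_le_iff_ne_zero.2 (by positivity)
  have hjqKq : j * q ≤ K * q := Nat.mul_le_mul_right q hjK
  have hKjp : (K - j)*p + j*p = K*p := by
    rw [← Nat.add_mul]
    congr 1
    omega
  have hrle := rowLen_le D hD p q K hq hdiag
  set apred : ℕ → Prop := fun t => (t = 0 ∨ rowLen D (j*q - 1 + t) + j*p < rowLen D (t-1)) ∧
            rowLen D t ≤ rowLen D (j*q - 1 + t) + j*p with hapred
  set S := (Finset.range (K*q - j*q + 1)).filter apred with hS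
  set extra : ℕ → Prop := fun t => 0 < t ∨ rowLen D (j*q - 1) + j*p < K*p with hextra
  have h1 : (Ejset D p q K j).card = (S.filter extra).card := by
    refine Finset.card_bij' (fun c _ => c.2 + 1 - j*q)
      (fun t _ => (rowLen D (j*q - 1 + t) + j*p, j*q - 1 + t)) ?_ ?_ ?_ ?_
    · rintro ⟨x, y⟩ hc
      simp only [Ejset, Finset.mem_filter, Finset.mem_product, Finset.mem_range] at hc
      obtain ⟨⟨hx, hy⟩, hc1, hc2⟩ := hc
      have hc1' : x = rowLen D y + j*p := hc1
      have hc2' : y + 1 = colLen D x + j*q := hc2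
      have hyt : j*q - 1 + (y + 1 - j*q) = y := by omega
      have hnotmem : (x, y + 1 - j*q) ∉ D := by
        rw [mem_iff_lt_colLen D hD]
        omega
      rw [mem_iff_lt_rowLen D hD] at hnotmem
      simp only [hS, hextra, hapred, Finset.mem_filter, Finset.mem_range]
      refine ⟨⟨by omega, ?_, by rw [hyt]; omega⟩, ?_⟩
      · by_cases ht0 : y + 1 - j*q = 0
        · exact Or.inl ht0
        · refine Or.inr ?_
          have hmem : (x, y + 1 - j*q - 1) ∈ D := by
            rw [mem_iff_lt_colLen D hD]
            omega
          rw [mem_iff_lt_rowLen D hD] at hmem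
          rw [hyt]
          omega
      · by_cases ht0 : y + 1 - j*q = 0
        · refine Or.inr ?_
          have hyy : y = j*q - 1 := by omega
          rw [← hyy]
          omega
        · exact Or.inl (by omega)
    · intro t ht
      simp only [hS, hextra, hapred, Finset.mem_filter, Finset.mem_range] at ht
      obtain ⟨⟨htM, hA1, hA2⟩, hex⟩ := ht
      simp only [Ejset, Finset.mem_filter, Finset.mem_product, Finset.mem_range]
      have hxK : rowLen D (j*q - 1 + t) + j*p < K*p := by
        by_cases ht0 : t = 0
        · rcases hex with hpos | hlt
          · omega
          · rw [ht0]
            simpa using hlt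
        · rcases hA1 with h | h
          · exact absurd h ht0
          · have := hrle (t-1)
            omega
      have hcolt : colLen D (rowLen D (j*q - 1 + t) + j*p) = t := by
        have hub : (rowLen D (j*q - 1 + t) + j*p, t) ∉ D := by
          rw [mem_iff_lt_rowLen D hD]
          omega
        rw [mem_iff_lt_colLen D hD] at hub
        by_cases ht0 : t = 0
        · omega
        · rcases hA1 with h | h
          · exact absurd h ht0
          · have hmem : (rowLen D (j*q - 1 + t) + j*p, t - 1) ∈ D := by
              rw [mem_iff_lt_rowLen D hD]
              omega
            rw [mem_iff_lt_colLen D hD] at hmem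
            omega
      refine ⟨⟨by omega, by omega⟩, by simp, ?_⟩
      simp only [hcolt]
      omega
    · rintro ⟨x, y⟩ hc
      simp only [Ejset, Finset.mem_filter, Finset.mem_product, Finset.mem_range] at hc
      obtain ⟨⟨hx, hy⟩, hc1, hc2⟩ := hc
      have hc1' : x = rowLen D y + j*p := hc1
      have hc2' : y + 1 = colLen D x + j*q := hc2
      have hyt : j*q - 1 + (y + 1 - j*q) = y := by omega
      simp only [hyt, Prod.mk.injEq, and_true]
      omega
    · intro t ht
      simp only
      omega
  have h2 : S.filter (fun t => ¬ extra t) = (if rowLen D (j*q - 1) = (K - j)*p then {0} else ∅) := by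
    by_cases hbad : rowLen D (j*q - 1) = (K - j)*p
    · rw [if_pos hbad]
      ext t
      simp only [hS, hextra, hapred, Finset.mem_filter, Finset.mem_range, Finset.mem_singleton]
      constructor
      · rintro ⟨_, hnex⟩
        push_neg at hnex
        omega
      · rintro rfl
        have e0 : j*q - 1 + 0 = j*q - 1 := by omega
        refine ⟨⟨by omega, Or.inl rfl, ?_⟩, ?_⟩
        · rw [e0]
          have := hrle 0
          omega
        · push_neg
          refine ⟨by omega, by omega⟩
    · rw [if_neg hbad]
      ext t
      simp only [hS, hextra, hapred, Finset.mem_filter, Finset.mem_range, Finset.notMem_empty,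
        iff_false]
      rintro ⟨_, hnex⟩
      push_neg at hnex
      have hle := rowLen_jq D hD p q K hp hq hdiag j hj1 hjK
      omega
  have h3 := Finset.card_filter_add_card_filter_not (s := S) (p := extra)
  rw [h1, ← h3, h2]
  by_cases hbad : rowLen D (j*q - 1) = (K - j)*p
  · rw [if_pos hbad, if_pos hbad]
    simp
  · rw [if_neg hbad, if_neg hbad]
    simp
end Main6

section Main7
variable (D : Finset (ℕ × ℕ)) (hD : IsYoung D) (p q K : ℕ)
  (hp : 0 < p) (hq : 0 < q) (hK : 0 < K) (hpq : Nat.Coprime p q)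
  (hdiag : ∀ c ∈ D, q * c.1 + p * c.2 + p + q ≤ K * p * q)

include hD hp hq hpq hdiag in
lemma stepNin : Nin D p q (K*p) (K*q) 0
    = ((Finset.Icc 1 K).filter (fun j => rowLen D (j*q - 1) = (K - j)*p)).card := by
  rw [Nin]
  refine (Finset.card_bij (fun j _ => j*q - 1) ?_ ?_ ?_).symm
  · intro j hj
    simp only [Finset.mem_filter, Finset.mem_Icc] at hj
    obtain ⟨⟨hj1, hjK⟩, hbad⟩ := hj
    have hjq1 : 1 ≤ j * q := Nat.one_le_iff_ne_zero.2 (by positivity)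
    have hjqKq : j * q ≤ K * q := Nat.mul_le_mul_right q hjK
    simp only [Finset.mem_filter, Finset.mem_range]
    refine ⟨by omega, ?_⟩
    rw [nlabel, hbad]
    have e1 : ((j*q - 1 : ℕ) : ℤ) = (j:ℤ)*(q:ℤ) - 1 := by
      push_cast [Nat.cast_sub hjq1]
      ring
    have e2 : (((K - j)*p : ℕ) : ℤ) = ((K:ℤ) - j)*p := by
      push_cast [Nat.cast_sub hjK]
      ring
    rw [e1, e2]
    push_cast
    ring
  · intro j₁ hj₁ j₂ hj₂ heq
    simp only [Finset.mem_filter, Finset.mem_Icc] at hj₁ hj₂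
    have h1 : 1 ≤ j₁ * q := Nat.one_le_iff_ne_zero.2 (Nat.mul_ne_zero (by omega) (by omega))
    have h2 : 1 ≤ j₂ * q := Nat.one_le_iff_ne_zero.2 (Nat.mul_ne_zero (by omega) (by omega))
    have heq' : j₁*q - 1 = j₂*q - 1 := heq
    have h3 : j₁ * q = j₂ * q := by omega
    exact Nat.eq_of_mul_eq_mul_right hq h3
  · intro y hy
    simp only [Finset.mem_filter, Finset.mem_range] at hy
    obtain ⟨hyQ, hnl⟩ := hy
    have hRle : rowLen D y ≤ K*p := rowLen_le D hD p q K hq hdiag y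
    rw [nlabel] at hnl
    push_cast at hnl
    have hZ : ((K*p - rowLen D y : ℕ):ℤ) * q = ((y:ℤ)+1)*p := by
      push_cast [Nat.cast_sub hRle]
      linear_combination hnl
    have hN : (K*p - rowLen D y) * q = (y+1)*p := by exact_mod_cast hZ
    have hdvd : q ∣ y + 1 :=
      Nat.Coprime.dvd_of_dvd_mul_right hpq.symm ⟨K*p - rowLen D y, by rw [← hN]; ring⟩
    obtain ⟨j, hj⟩ := hdvd
    have hj1 : 1 ≤ j := by
      rcases Nat.eq_zero_or_pos j with h | h
      · subst h; simp at hj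
      · exact h
    have hcm : q * j = j * q := Nat.mul_comm q j
    have hjK : j ≤ K := by
      have hKq : q * K = K * q := Nat.mul_comm q K
      have h4 : q * j ≤ q * K := by omega
      exact Nat.le_of_mul_le_mul_left h4 hq
    have h5 : (K*p - rowLen D y) * q = (j*p) * q := by
      rw [hN, hj]
      ring
    have h6 : K*p - rowLen D y = j*p := Nat.eq_of_mul_eq_mul_right hq h5
    have e : (K - j)*p = K*p - j*p := Nat.sub_mul K j p
    have hjpKp : j * p ≤ K * p := Nat.mul_le_mul_right p hjK
    have hyeq : j*q - 1 = y := by omega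
    have hmem : j ∈ (Finset.Icc 1 K).filter (fun j => rowLen D (j*q - 1) = (K - j)*p) := by
      simp only [Finset.mem_filter, Finset.mem_Icc]
      rw [hyeq]
      exact ⟨⟨hj1, hjK⟩, by omega⟩
    exact ⟨j, hmem, hyeq⟩
end Main7


theorem LW_ctot_formula (D : Finset (ℕ × ℕ)) (hD : IsYoung D)
    (p q K : ℕ) (hp : 0 < p) (hq : 0 < q) (hK : 0 < K) (hpq : Nat.Coprime p q)
    (hdiag : ∀ c ∈ D, q * c.1 + p * c.2 + p + q ≤ K * p * q) :
    (((D.filter fun c => p * leg D c = q * (arm D c + 1)).card : ℤ)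
        + ((D.filter fun c => p * (leg D c + 1) = q * arm D c).card : ℤ))
      = (∑ v ∈ labels D p q (K * p) (K * q),
            (Win D p q (K * p) v : ℤ) * (Nin D p q (K * p) (K * q) v : ℤ))
        - (K : ℤ) + (Nin D p q (K * p) (K * q) 0 : ℤ) := by
  classical
  have hEq := sum_WinNin D p q (K*p) (K*q)
  have hsplit := Finset.card_filter_add_card_filter_not
    (s := ((Finset.range (K*p)) ×ˢ (Finset.range (K*q))).filter
      (fun c => wlabel D p q (K*p) c.1 = nlabel D p q (K*p) c.2)) (p := fun c => c ∈ D)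
  have h2 := step2 D hD p q K hp hq hdiag
  have h3 := step3 D hD p q K hp hq hpq
  have h4 := step4 D hD p q K hp hq hpq hdiag
  have h3c : ((Finset.Icc 1 K).biUnion (fun j => Ejset D p q K j)).card
      = ∑ j ∈ Finset.Icc 1 K, (Ejset D p q K j).card :=
    Finset.card_biUnion (fun x hx y hy hxy => step3disj D p q K hq hx hy hxy)
  have h4c : ((Finset.Icc 1 K).biUnion (fun j => Cjset D p q j)).card
      = ∑ j ∈ Finset.Icc 1 K, (Cjset D p q j).card :=
    Finset.card_biUnion (fun x hx y hy hxy => step4disj D p q K hq hx hy hxy)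
  have hper : ∀ j ∈ Finset.Icc 1 K,
      (Ejset D p q K j).card + (if rowLen D (j*q - 1) = (K - j)*p then 1 else 0)
        = (Cjset D p q j).card + 1 := by
    intro j hj
    rw [Finset.mem_Icc] at hj
    have hA := stepA D hD p q K hp hq hdiag j hj.1 hj.2
    have hB := stepB D hD p q K hp hq hdiag j hj.1 hj.2
    have hT := stepTel D hD p q K hp hq hdiag j hj.1 hj.2
    rw [Finset.sum_boole, Finset.sum_boole] at hT
    have hT' : ((Finset.range (K*q - j*q + 1)).filter
          (fun t => (t = 0 ∨ rowLen D (j*q - 1 + t) + j*p < rowLen D (t-1)) ∧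
            rowLen D t ≤ rowLen D (j*q - 1 + t) + j*p)).card
        = ((Finset.range (K*q - j*q + 1)).filter
          (fun t => rowLen D (j*q + t) + j*p < rowLen D t ∧
            rowLen D t ≤ rowLen D (j*q - 1 + t) + j*p)).card + 1 := by
      exact_mod_cast hT
    omega
  have hsum2 : ∑ j ∈ Finset.Icc 1 K, ((Ejset D p q K j).card
        + (if rowLen D (j*q - 1) = (K - j)*p then 1 else 0))
      = ∑ j ∈ Finset.Icc 1 K, ((Cjset D p q j).card + 1) := Finset.sum_congr rfl hper
  rw [Finset.sum_add_distrib, Finset.sum_add_distrib] at hsum2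
  have hcardIcc : ∑ _j ∈ Finset.Icc 1 K, 1 = K := by
    rw [Finset.sum_const, smul_eq_mul, Nat.card_Icc]
    omega
  have hNin := stepNin D hD p q K hp hq hpq hdiag
  have hNinSum : ∑ j ∈ Finset.Icc 1 K, (if rowLen D (j*q - 1) = (K - j)*p then 1 else 0)
      = ((Finset.Icc 1 K).filter (fun j => rowLen D (j*q - 1) = (K - j)*p)).card := by
    rw [Finset.sum_boole]
    simp
  have hcast : ((∑ v ∈ labels D p q (K*p) (K*q),
        Win D p q (K*p) v * Nin D p q (K*p) (K*q) v : ℕ) : ℤ)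
      = ∑ v ∈ labels D p q (K*p) (K*q),
          (Win D p q (K*p) v : ℤ) * (Nin D p q (K*p) (K*q) v : ℤ) := by
    push_cast
    rfl
  have g1 : (D.filter fun c => p * leg D c = q * (arm D c + 1)).card
      + ∑ j ∈ Finset.Icc 1 K, (Ejset D p q K j).card
      = (((Finset.range (K*p)) ×ˢ (Finset.range (K*q))).filter
          (fun c => wlabel D p q (K*p) c.1 = nlabel D p q (K*p) c.2)).card := by
    rw [← h2, ← h3c, ← h3]
    exact hsplit
  have g2 : (∑ j ∈ Finset.Icc 1 K, (Ejset D p q K j).card)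
      + (∑ j ∈ Finset.Icc 1 K, (if rowLen D (j*q - 1) = (K - j)*p then 1 else 0))
      = (∑ j ∈ Finset.Icc 1 K, (Cjset D p q j).card) + K := by
    rw [hsum2, hcardIcc]
  have g3 : (D.filter fun c => p * (leg D c + 1) = q * arm D c).card
      = ∑ j ∈ Finset.Icc 1 K, (Cjset D p q j).card :=
    (congrArg Finset.card h4).trans h4c
  have g4 : Nin D p q (K*p) (K*q) 0
      = ∑ j ∈ Finset.Icc 1 K, (if rowLen D (j*q - 1) = (K - j)*p then 1 else 0) :=
    hNin.trans hNinSum.symm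
  rw [← hcast, hEq]
  rw [g3]
  rw [g4, ← g1]
  omega
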